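/- Let G be a graph with a contraction sequence (G = G_1, ..., G_n) of width d and let k be a natural number. Let i in [2, n], let π = (T, D, ∅, f) be an extended i-profile with v in T (where v is the new vertex of G_i), let f' be compatible with π, let {(T_j, D_j, ∅, f_j) : j in [m]} be an f'-decomposition of π, and for each j in [m] let S_j be a solution of (T_j, D_j, ∅, f_j) with vertex-cover-value ν_j. Then S = ∪_{j∈[m]} S_j is a solution of π whose vertex-cover-value equals Σ_{j∈[m]} ν_j plus the sum, over all pairs 1 ≤ j < ℓ ≤ m and all pairs (u, w) with u in T_j, w in T_ℓ, and uw a black edge of G_{i-1}, of f_j(u)·|beta(w)| + f_ℓ(w)·|beta(u)| − f_j(u)·f_ℓ(w). -/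

import Mathlib

attribute [local instance 10] Classical.propDecidable

/-- A trigraph: a finite simple graph whose edges are partitioned into black and red edges. -/
structure Trigraph (α : Type) where
  verts : Finset α
  black : α → α → Prop
  red : α → α → Prop
  black_symm : ∀ x y, black x y → black y x
  red_symm : ∀ x y, red x y → red y x
  black_irrefl : ∀ x, ¬ black x x
  red_irrefl : ∀ x, ¬ red x x
  black_red_disjoint : ∀ x y, black x y → ¬ red x y
  black_mem : ∀ x y, black x y → x ∈ verts ∧ y ∈ verts
  red_mem : ∀ x y, red x y → x ∈ verts ∧ y ∈ verts

namespace Trigraph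

/-- The red graph of a trigraph. -/
def redGraph {α : Type} (G : Trigraph α) : SimpleGraph α where
  Adj := G.red
  symm := ⟨fun x y h => G.red_symm x y h⟩
  loopless := ⟨fun x h => G.red_irrefl x h⟩

/-- The red degree of a vertex. -/
noncomputable def redDegree {α : Type} (G : Trigraph α) (x : α) : ℕ :=
  Set.ncard {y | G.red x y}

end Trigraph

variable {α : Type} [DecidableEq α]

/-- `Contracts G G' u v w` : the trigraph `G'` is obtained from the trigraph `G` by
contracting the two distinct vertices `u, v` into the new vertex `w`. -/
def Contracts (G G' : Trigraph α) (u v w : α) : Prop :=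
  u ∈ G.verts ∧ v ∈ G.verts ∧ u ≠ v ∧ w ∉ G.verts ∧
  G'.verts = insert w (G.verts \ {u, v}) ∧
  (∀ x ∈ G.verts \ {u, v}, (G'.black w x ↔ G.black u x ∧ G.black v x)) ∧
  (∀ x ∈ G.verts \ {u, v},
    (G'.red w x ↔ (¬ (G.black u x ∧ G.black v x)) ∧
      (G.black u x ∨ G.red u x ∨ G.black v x ∨ G.red v x))) ∧
  (∀ x, x ∈ G.verts \ {u, v} → ∀ y, y ∈ G.verts \ {u, v} →
    ((G'.black x y ↔ G.black x y) ∧ (G'.red x y ↔ G.red x y)))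

/-- A contraction sequence `(G = G₁, …, Gₙ)` of a graph `G` (a trigraph with no red edges),
together with the data of the contracted vertices `cu i, cv i` and the new vertex `cw i`
at each step `i ∈ [2, n]`. -/
structure ContractionSeq (α : Type) [DecidableEq α] (n : ℕ) where
  seq : ℕ → Trigraph α
  cu : ℕ → α
  cv : ℕ → α
  cw : ℕ → α
  one_le : 1 ≤ n
  init_noRed : ∀ x y, ¬ (seq 1).red x y
  last_single : (seq n).verts.card = 1
  step : ∀ i, 2 ≤ i → i ≤ n → Contracts (seq (i - 1)) (seq i) (cu i) (cv i) (cw i)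

namespace ContractionSeq

variable {n : ℕ}

/-- The contraction sequence has width `d`: every vertex of every trigraph in the
sequence has red degree at most `d`. -/
def HasWidth (C : ContractionSeq α n) (d : ℕ) : Prop :=
  ∀ i, 1 ≤ i → i ≤ n → ∀ x, (C.seq i).redDegree x ≤ d

/-- The bag `β(u)` of a vertex `u` of `Gᵢ`: the set of vertices of `G = G₁`
contracted into `u`. -/
def bag (C : ContractionSeq α n) : ℕ → α → Finset α
  | 0, x => {x}
  | 1, x => {x}
  | i + 2, x =>
    if x = C.cw (i + 2) then bag C (i + 1) (C.cu (i + 2)) ∪ bag C (i + 1) (C.cv (i + 2))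
    else bag C (i + 1) x

/-- `β(T)`, the union of the bags of the vertices in `T`. -/
def bags (C : ContractionSeq α n) (i : ℕ) (T : Finset α) : Finset α :=
  T.biUnion (C.bag i)

end ContractionSeq

variable {n : ℕ}

/-- A basic `i`-profile `(T, D)`. -/
def IsBasicProfile (C : ContractionSeq α n) (k d i : ℕ) (T D : Finset α) : Prop :=
  T ⊆ (C.seq i).verts ∧ T.card ≤ k * (d + 1) ∧
  (SimpleGraph.induce (↑T : Set α) (C.seq i).redGraph).Connected ∧
  D ⊆ T ∧ D.card ≤ k

/-- `T' = (T \ {v}) ∪ {u₁, u₂}` where `v = cw i` is the new vertex of `Gᵢ` and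
`u₁ = cu i`, `u₂ = cv i` are the vertices contracted into it. -/
def newT (C : ContractionSeq α n) (i : ℕ) (T : Finset α) : Finset α :=
  T.erase (C.cw i) ∪ {C.cu i, C.cv i}

/-- `D' ⊆ T'` is compatible with the basic `i`-profile `(T, D)`. -/
def DCompat (C : ContractionSeq α n) (k i : ℕ) (T D D' : Finset α) : Prop :=
  D' ⊆ newT C i T ∧
  D.erase (C.cw i) = (D'.erase (C.cu i)).erase (C.cv i) ∧
  D'.card ≤ k ∧
  (C.cw i ∈ D ↔ (C.cu i ∈ D' ∨ C.cv i ∈ D'))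

/-- A `D'`-decomposition `{(T₁, D₁), …, (Tₘ, Dₘ)}` of the basic `i`-profile `(T, D)`. -/
def IsDDecomp (C : ContractionSeq α n) (k d i : ℕ) (T D D' : Finset α)
    (m : ℕ) (Tj Dj : Fin m → Finset α) : Prop :=
  (∀ j, IsBasicProfile C k d (i - 1) (Tj j) (Dj j)) ∧
  (∀ j ℓ, j ≠ ℓ → Disjoint (Tj j) (Tj ℓ)) ∧
  newT C i T = Finset.univ.biUnion Tj ∧
  D' = Finset.univ.biUnion Dj ∧
  DCompat C k i T D D' ∧
  (∀ j ℓ, j ≠ ℓ → ∀ x ∈ Tj j, ∀ y ∈ Dj ℓ, ¬ (C.seq (i - 1)).red x y)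

/-- An extended `i`-profile `(T, D, M, f)`; the function `f : T → [0, k]` is modelled as a
function `f : α → ℕ` vanishing outside `T`. -/
def IsExtProfile (C : ContractionSeq α n) (k d i : ℕ) (T D M : Finset α) (f : α → ℕ) : Prop :=
  IsBasicProfile C k d i T D ∧ M ⊆ T ∧
  (∀ u, u ∉ T → f u = 0) ∧
  (∀ u ∈ T, f u ≤ k) ∧
  (∑ u ∈ T, f u) ≤ k ∧
  (∀ u ∈ T, f u ≤ (C.bag i u).card) ∧
  D = T.filter (fun u => f u ≠ 0)

/-- A solution of an extended `i`-profile `(T, D, M, f)`. -/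
def IsSolution (C : ContractionSeq α n) (i : ℕ) (T : Finset α) (f : α → ℕ)
    (S : Finset α) : Prop :=
  S ⊆ C.bags i T ∧ ∀ u ∈ T, f u = (S ∩ C.bag i u).card

/-- The closed neighborhood `N[S]` of `S` in the graph `G = G₁`. -/
def closedNbhd (C : ContractionSeq α n) (S : Finset α) : Set α :=
  ↑S ∪ {x | ∃ y ∈ S, (C.seq 1).black x y}

/-- The dominating-set-value `|N[S] ∩ β(M)|` of a solution `S`. -/
noncomputable def dsValue (C : ContractionSeq α n) (i : ℕ) (M S : Finset α) : ℕ :=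
  Set.ncard (closedNbhd C S ∩ ↑(C.bags i M))

/-- The vertex-cover-value of a solution `S`: the number of edges of `G` with one
endpoint in `S` and the other endpoint in `β(T)`. -/
noncomputable def vcValue (C : ContractionSeq α n) (i : ℕ) (T S : Finset α) : ℕ :=
  Set.ncard {e : Sym2 α | ∃ x y, e = s(x, y) ∧ (C.seq 1).black x y ∧ x ∈ S ∧ y ∈ C.bags i T}

/-- The function `f' : T' → [0, k]` is compatible with the extended `i`-profile
`(T, D, M, f)`. -/
def FCompat (C : ContractionSeq α n) (k i : ℕ) (T : Finset α) (f f' : α → ℕ) : Prop :=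
  (∀ u, u ∉ newT C i T → f' u = 0) ∧
  (∀ u ∈ newT C i T, f' u ≤ k) ∧
  f (C.cw i) = f' (C.cu i) + f' (C.cv i) ∧
  f' (C.cu i) ≤ (C.bag (i - 1) (C.cu i)).card ∧
  f' (C.cv i) ≤ (C.bag (i - 1) (C.cv i)).card ∧
  (∀ u ∈ T.erase (C.cw i), f' u = f u)

/-- `D' = {u ∈ T' : f'(u) ≠ 0}`. -/
def Dset (C : ContractionSeq α n) (i : ℕ) (T : Finset α) (f' : α → ℕ) : Finset α :=
  (newT C i T).filter (fun u => f' u ≠ 0)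

/-- `M-hat = (M \ {v}) ∪ {u₁, u₂}` if `v ∈ M`, and `M-hat = M` otherwise. -/
def Mhat (C : ContractionSeq α n) (i : ℕ) (M : Finset α) : Finset α :=
  if C.cw i ∈ M then M.erase (C.cw i) ∪ {C.cu i, C.cv i} else M

/-- `M' = {u ∈ M-hat : u has no black neighbor in D' in G_{i-1}}`. -/
noncomputable def Mset (C : ContractionSeq α n) (i : ℕ) (M D' : Finset α) : Finset α :=
  (Mhat C i M).filter (fun u => ¬ ∃ w ∈ D', (C.seq (i - 1)).black u w)

/-- An `f'`-decomposition `{(Tⱼ, Dⱼ, Mⱼ, fⱼ) : j ∈ [m]}` of the extended `i`-profile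
`(T, D, M, f)`. -/
def IsFDecomp (C : ContractionSeq α n) (k d i : ℕ) (T D M : Finset α) (f' : α → ℕ)
    (m : ℕ) (Tj Dj Mj : Fin m → Finset α) (fj : Fin m → α → ℕ) : Prop :=
  (∀ j, IsExtProfile C k d (i - 1) (Tj j) (Dj j) (Mj j) (fj j)) ∧
  (∀ j, ∀ u ∈ Tj j, fj j u = f' u) ∧
  Dset C i T f' = Finset.univ.biUnion Dj ∧
  Mset C i M (Dset C i T f') = Finset.univ.biUnion Mj ∧
  IsDDecomp C k d i T D (Dset C i T f') m Tj Dj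

/-- The adjacency relation of the expanded graph `G_π` of a virtual profile with
context `T`, virtual vertices `Vv` and virtual edges `E`. -/
def expAdj (C : ContractionSeq α n) (i : ℕ) (T Vv : Finset α) (E : Finset (Sym2 α))
    (x y : α) : Prop :=
  (x ∈ C.bags i T ∧ y ∈ C.bags i T ∧ (C.seq 1).black x y) ∨
  (x ∈ Vv ∧ y ∈ Vv ∧ s(x, y) ∈ E) ∨
  (y ∈ Vv ∧ ∃ u ∈ T, x ∈ C.bag i u ∧ s(u, y) ∈ E) ∨
  (x ∈ Vv ∧ ∃ u ∈ T, y ∈ C.bag i u ∧ s(u, x) ∈ E)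

/-- A virtual `i`-profile `(T, D, V, E, f, H)`.  The graph `H` is given by its labeling
`h : [k] → V(H)` (so `V(H)` is the range of `h`) and its edge set `HE`. -/
def IsVirtualProfile (C : ContractionSeq α n) (k d i : ℕ)
    (T D Vv : Finset α) (E : Finset (Sym2 α)) (f h : Fin k → α)
    (HE : Finset (Sym2 α)) : Prop :=
  IsBasicProfile C k d i T D ∧
  Vv.card ≤ k ∧
  (∀ x ∈ Vv, ∀ j, 1 ≤ j → j ≤ n → x ∉ (C.seq j).verts) ∧
  (∀ e ∈ E, ∃ u w, e = s(u, w) ∧ u ∈ Vv ∪ T ∧ w ∈ Vv) ∧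
  (∀ a, f a ∈ D ∪ Vv) ∧
  (∀ x ∈ D ∪ Vv, ∃ a, f a = x) ∧
  (∀ u ∈ D, (Finset.univ.filter (fun a => f a = u)).card ≤ (C.bag i u).card) ∧
  (∀ e ∈ HE, ¬ e.IsDiag ∧ ∀ x ∈ e, ∃ a, h a = x)

/-- A solution `(s₁, …, s_k)` of a virtual `i`-profile. -/
def IsVSolution (C : ContractionSeq α n) (i k : ℕ)
    (T D Vv : Finset α) (E : Finset (Sym2 α)) (f h : Fin k → α) (HE : Finset (Sym2 α))
    (sol : Fin k → α) : Prop :=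
  (∀ a, (f a ∈ Vv → sol a = f a) ∧ (f a ∈ D → sol a ∈ C.bag i (f a))) ∧
  (∀ a b, sol a = sol b ↔ h a = h b) ∧
  (∀ a b, expAdj C i T Vv E (sol a) (sol b) ↔ s(h a, h b) ∈ HE)

/-- Quantifier-free first-order formulas in the language of graphs with free variables
`x₁, …, x_k, y` (the variable `y` being the last one). -/
inductive QF (k : ℕ) : Type where
  | eq : Fin (k + 1) → Fin (k + 1) → QF k
  | adj : Fin (k + 1) → Fin (k + 1) → QF k
  | not : QF k → QF k
  | and : QF k → QF k → QF k
  | or : QF k → QF k → QF k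

/-- Satisfaction of a quantifier-free formula under an adjacency relation `A` and a
valuation `val` of the variables. -/
def QF.Sat {β : Type} {k : ℕ} (A : β → β → Prop) (val : Fin (k + 1) → β) : QF k → Prop
  | .eq a b => val a = val b
  | .adj a b => A (val a) (val b)
  | .not φ => ¬ QF.Sat A val φ
  | .and φ ψ => QF.Sat A val φ ∧ QF.Sat A val ψ
  | .or φ ψ => QF.Sat A val φ ∨ QF.Sat A val ψ

/-- The value `Σ_{α ∈ I} |{u ∈ β(T) : G_π ⊨ ψ_α(s₁, …, s_k, u)}|` of a solution of a
virtual `i`-profile. -/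
noncomputable def vValue {I : Type} [Fintype I] {k : ℕ} (ψ : I → QF k)
    (C : ContractionSeq α n) (i : ℕ) (T Vv : Finset α) (E : Finset (Sym2 α))
    (sol : Fin k → α) : ℕ :=
  ∑ a : I, Set.ncard {u : α | u ∈ C.bags i T ∧
    QF.Sat (expAdj C i T Vv E) (Fin.snoc sol u) (ψ a)}

/-- The function `f' : [k] → T' ∪ V` is compatible with the virtual `i`-profile. -/
def VFCompat (C : ContractionSeq α n) (i k : ℕ) (f f' : Fin k → α) : Prop :=
  ∀ a, (f a = C.cw i → (f' a = C.cu i ∨ f' a = C.cv i)) ∧ (f a ≠ C.cw i → f' a = f a)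

/-- `E' = {uw ∈ E : u, w ∈ T' ∪ V} ∪ {u₁w, u₂w : vw ∈ E}`. -/
def Eprime (C : ContractionSeq α n) (i : ℕ) (T Vv : Finset α) (E : Finset (Sym2 α)) :
    Set (Sym2 α) :=
  {e | e ∈ E ∧ ∀ x ∈ e, x ∈ newT C i T ∪ Vv} ∪
  {e | ∃ w, s(C.cw i, w) ∈ E ∧ (e = s(C.cu i, w) ∨ e = s(C.cv i, w))}

/-- `D' = range(f') ∩ T'`. -/
noncomputable def rangeD {k : ℕ} (C : ContractionSeq α n) (i : ℕ) (T : Finset α)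
    (f' : Fin k → α) : Finset α :=
  (newT C i T).filter (fun u => ∃ a, f' a = u)

/-- An `f'`-decomposition `{(Tⱼ, Dⱼ, Vⱼ, Eⱼ, fⱼ, H) : j ∈ [m]}` of the virtual
`i`-profile `(T, D, V, E, f, H)`. -/
def IsVDecomp (C : ContractionSeq α n) (k d i : ℕ)
    (T D Vv : Finset α) (E : Finset (Sym2 α)) (f h : Fin k → α) (HE : Finset (Sym2 α))
    (f' : Fin k → α) (m : ℕ) (Tj Dj Vj : Fin m → Finset α)
    (Ej : Fin m → Finset (Sym2 α)) (fj : Fin m → Fin k → α) : Prop :=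
  IsDDecomp C k d i T D (rangeD C i T f') m Tj Dj ∧
  (∀ j, IsVirtualProfile C k d (i - 1) (Tj j) (Dj j) (Vj j) (Ej j) (fj j) h HE) ∧
  (∀ j, Vj j =
    Vv ∪ (Finset.univ.filter (fun a => f' a ∈ rangeD C i T f' \ Dj j)).image h) ∧
  (∀ j a, (f' a ∈ Dj j ∪ Vv → fj j a = f' a) ∧
          (f' a ∈ rangeD C i T f' \ Dj j → fj j a = h a)) ∧
  (∀ j e, e ∈ Ej j ↔
    ((e ∈ Eprime C i T Vv E ∧ ∀ x ∈ e, x ∈ Vv ∪ Tj j) ∨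
     (∃ u a, e = s(u, h a) ∧ u ∈ Vv ∪ Tj j ∧ f' a ∈ rangeD C i T f' \ Dj j ∧
        (s(u, f' a) ∈ Eprime C i T Vv E ∨ (C.seq (i - 1)).black u (f' a))) ∨
     (∃ a b, e = s(h a, h b) ∧ s(h a, h b) ∈ HE ∧
        f' a ∈ rangeD C i T f' \ Dj j ∧ f' b ∈ rangeD C i T f' \ Dj j)))

/-- `⊕_{j ∈ [m]} sⱼ = s¹ ⊕ (s² ⊕ ( … ))`, where the `a`-th entry of `s¹ ⊕ s²` is
`s¹ a` if `f₁ a ∈ D₁` and `s² a` otherwise. -/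
noncomputable def bigOplus {k : ℕ} [Nonempty α] :
    (m : ℕ) → (Fin m → Fin k → α) → (Fin m → Fin k → α) → (Fin m → Finset α) →
      Fin k → α
  | 0, _, _, _ => fun _ => Classical.arbitrary α
  | 1, sol, _, _ => sol 0
  | m + 2, sol, f, D => fun a =>
      if f 0 a ∈ D 0 then sol 0 a
      else bigOplus (m + 1) (fun j => sol j.succ) (fun j => f j.succ)
        (fun j => D j.succ) a

section Aux

variable {α : Type} [DecidableEq α] {n : ℕ}

lemma bag_of_ne (C : ContractionSeq α n) {i : ℕ} (h2 : 2 ≤ i) {x : α} (hx : x ≠ C.cw i) :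
    C.bag i x = C.bag (i - 1) x := by
  obtain ⟨j, rfl⟩ : ∃ j, i = j + 2 := ⟨i - 2, by omega⟩
  simp [ContractionSeq.bag, hx]

lemma bag_cw (C : ContractionSeq α n) {i : ℕ} (h2 : 2 ≤ i) :
    C.bag i (C.cw i) = C.bag (i - 1) (C.cu i) ∪ C.bag (i - 1) (C.cv i) := by
  obtain ⟨j, rfl⟩ : ∃ j, i = j + 2 := ⟨i - 2, by omega⟩
  simp [ContractionSeq.bag]

/-- The key invariant relating bags at step `j` to edges of `G₁`. -/
def Trip (C : ContractionSeq α n) (j : ℕ) (u w : α) : Prop :=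
  Disjoint (C.bag j u) (C.bag j w) ∧
  ((C.seq j).black u w → ∀ x ∈ C.bag j u, ∀ y ∈ C.bag j w, (C.seq 1).black x y) ∧
  (∀ x ∈ C.bag j u, ∀ y ∈ C.bag j w, (C.seq 1).black x y →
    (C.seq j).black u w ∨ (C.seq j).red u w)

lemma Trip.symm {C : ContractionSeq α n} {j : ℕ} {u w : α} (h : Trip C j w u) :
    Trip C j u w := by
  obtain ⟨h1, h2, h3⟩ := h
  refine ⟨h1.symm, ?_, ?_⟩
  · intro hb x hx y hy
    exact (C.seq 1).black_symm _ _ (h2 ((C.seq j).black_symm _ _ hb) y hy x hx)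
  · intro x hx y hy hb
    rcases h3 y hy x hx ((C.seq 1).black_symm _ _ hb) with h | h
    · exact Or.inl ((C.seq j).black_symm _ _ h)
    · exact Or.inr ((C.seq j).red_symm _ _ h)

lemma trip_all (C : ContractionSeq α n) (j : ℕ) (h1 : 1 ≤ j) (hj : j ≤ n) :
    ∀ u ∈ (C.seq j).verts, ∀ w ∈ (C.seq j).verts, u ≠ w → Trip C j u w := by
  induction j with
  | zero => omega
  | succ j ih =>
    rcases Nat.eq_or_lt_of_le h1 with h | h
    · -- j + 1 = 1
      have hj0 : j = 0 := by omega
      subst hj0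
      intro u _ w _ huw
      refine ⟨by simp only [ContractionSeq.bag]; simpa using huw, ?_, ?_⟩
      · intro hb x hx y hy
        simp only [ContractionSeq.bag, Finset.mem_singleton] at hx hy
        subst hx; subst hy; exact hb
      · intro x hx y hy hb
        simp only [ContractionSeq.bag, Finset.mem_singleton] at hx hy
        subst hx; subst hy; exact Or.inl hb
    · -- j ≥ 1
      have hjn : j ≤ n := by omega
      have IH := ih (by omega) hjn
      obtain ⟨hcu, hcv, hne, hcw, hverts, hbw, hrw, hsame⟩ :=
        C.step (j + 1) (by omega) hj
      have hstep1 : (j + 1) - 1 = j := by omega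
      rw [hstep1] at hcu hcv hcw hverts hbw hrw hsame
      have hbag : ∀ x : α, x ≠ C.cw (j + 1) → C.bag (j + 1) x = C.bag j x := by
        intro x hx
        have := bag_of_ne C (i := j + 1) (by omega) hx
        rwa [hstep1] at this
      have hbagw : C.bag (j + 1) (C.cw (j + 1)) =
          C.bag j (C.cu (j + 1)) ∪ C.bag j (C.cv (j + 1)) := by
        have := bag_cw C (i := j + 1) (by omega)
        rwa [hstep1] at this
      -- main claim for the ordered case u = cw
      have main : ∀ w ∈ (C.seq j).verts \ {C.cu (j + 1), C.cv (j + 1)},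
          Trip C (j + 1) (C.cw (j + 1)) w := by
        intro w hw
        have hwmem : w ∈ (C.seq j).verts := (Finset.mem_sdiff.mp hw).1
        have hwne : w ≠ C.cu (j + 1) ∧ w ≠ C.cv (j + 1) := by
          have := (Finset.mem_sdiff.mp hw).2
          simp only [Finset.mem_insert, Finset.mem_singleton] at this
          tauto
        have hwcw : w ≠ C.cw (j + 1) := fun h => hcw (h ▸ hwmem)
        have Tu := IH (C.cu (j + 1)) hcu w hwmem (Ne.symm hwne.1)
        have Tv := IH (C.cv (j + 1)) hcv w hwmem (Ne.symm hwne.2)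
        rw [Trip] at Tu Tv ⊢
        rw [hbagw, hbag w hwcw]
        refine ⟨Finset.disjoint_union_left.mpr ⟨Tu.1, Tv.1⟩, ?_, ?_⟩
        · intro hb x hx y hy
          rw [(hbw w hw)] at hb
          rcases Finset.mem_union.mp hx with hx | hx
          · exact Tu.2.1 hb.1 x hx y hy
          · exact Tv.2.1 hb.2 x hx y hy
        · intro x hx y hy hb
          rw [hbw w hw, hrw w hw]
          rcases Finset.mem_union.mp hx with hx | hx
          · rcases Tu.2.2 x hx y hy hb with h | h
            · by_cases hc : (C.seq j).black (C.cv (j + 1)) w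
              · exact Or.inl ⟨h, hc⟩
              · exact Or.inr ⟨fun hh => hc hh.2, Or.inl h⟩
            · exact Or.inr ⟨fun hh => (C.seq j).black_red_disjoint _ _ hh.1 h,
                Or.inr (Or.inl h)⟩
          · rcases Tv.2.2 x hx y hy hb with h | h
            · by_cases hc : (C.seq j).black (C.cu (j + 1)) w
              · exact Or.inl ⟨hc, h⟩
              · exact Or.inr ⟨fun hh => hc hh.1, Or.inr (Or.inr (Or.inl h))⟩
            · exact Or.inr ⟨fun hh => (C.seq j).black_red_disjoint _ _ hh.2 h,
                Or.inr (Or.inr (Or.inr h))⟩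
      intro u hu w hw huw
      rw [hverts] at hu hw
      by_cases hucw : u = C.cw (j + 1)
      · subst hucw
        rcases Finset.mem_insert.mp hw with h | h
        · exact absurd h.symm huw
        · exact main w h
      · by_cases hwcw : w = C.cw (j + 1)
        · subst hwcw
          rcases Finset.mem_insert.mp hu with h | h
          · exact absurd h huw
          · exact (main u h).symm
        · have hu' : u ∈ (C.seq j).verts \ {C.cu (j+1), C.cv (j+1)} := by
            rcases Finset.mem_insert.mp hu with h | h
            · exact absurd h hucw
            · exact h
          have hw' : w ∈ (C.seq j).verts \ {C.cu (j+1), C.cv (j+1)} := by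
            rcases Finset.mem_insert.mp hw with h | h
            · exact absurd h hwcw
            · exact h
          have T := IH u (Finset.mem_sdiff.mp hu').1 w (Finset.mem_sdiff.mp hw').1 huw
          rw [Trip] at T ⊢
          rw [hbag u hucw, hbag w hwcw, (hsame u hu' w hw').1, (hsame u hu' w hw').2]
          exact T

lemma mem_bags {C : ContractionSeq α n} {i : ℕ} {T : Finset α} {x : α} :
    x ∈ C.bags i T ↔ ∃ u ∈ T, x ∈ C.bag i u := Finset.mem_biUnion

noncomputable def edgeFS (C : ContractionSeq α n) (S W : Finset α) : Finset (Sym2 α) :=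
  ((S ×ˢ W).filter (fun p => (C.seq 1).black p.1 p.2)).image (fun p => s(p.1, p.2))

lemma mem_edgeFS {C : ContractionSeq α n} {S W : Finset α} {e : Sym2 α} :
    e ∈ edgeFS C S W ↔ ∃ x y, e = s(x, y) ∧ (C.seq 1).black x y ∧ x ∈ S ∧ y ∈ W := by
  simp only [edgeFS, Finset.mem_image, Finset.mem_filter, Finset.mem_product, Prod.exists]
  constructor
  · rintro ⟨x, y, ⟨⟨hx, hy⟩, hb⟩, rfl⟩; exact ⟨x, y, rfl, hb, hx, hy⟩
  · rintro ⟨x, y, rfl, hb, hx, hy⟩; exact ⟨x, y, ⟨⟨hx, hy⟩, hb⟩, rfl⟩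

lemma vcValue_eq_card (C : ContractionSeq α n) (i : ℕ) (T S : Finset α) :
    vcValue C i T S = (edgeFS C S (C.bags i T)).card := by
  rw [vcValue, ← Set.ncard_coe_finset]
  congr 1
  ext e
  simp only [Set.mem_setOf_eq, Finset.coe_sort_coe, Finset.mem_coe, mem_edgeFS]

noncomputable def Xpairs (C : ContractionSeq α n) (i : ℕ) (TA TB SA SB : Finset α) :
    Finset (α × α) :=
  ((C.bags i TA) ×ˢ (C.bags i TB)).filter
    (fun q => (C.seq 1).black q.1 q.2 ∧ (q.1 ∈ SA ∨ q.2 ∈ SB))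

lemma mem_Xpairs {C : ContractionSeq α n} {i : ℕ} {TA TB SA SB : Finset α} {q : α × α} :
    q ∈ Xpairs C i TA TB SA SB ↔ q.1 ∈ C.bags i TA ∧ q.2 ∈ C.bags i TB ∧
      (C.seq 1).black q.1 q.2 ∧ (q.1 ∈ SA ∨ q.2 ∈ SB) := by
  simp only [Xpairs, Finset.mem_filter, Finset.mem_product, and_assoc]

noncomputable def Xedges (C : ContractionSeq α n) (i : ℕ) (TA TB SA SB : Finset α) :
    Finset (Sym2 α) :=
  (Xpairs C i TA TB SA SB).image (fun q => s(q.1, q.2))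

lemma card_Xedges (C : ContractionSeq α n) (i : ℕ) {TA TB : Finset α} (SA SB : Finset α)
    (hdisj : Disjoint (C.bags i TA) (C.bags i TB)) :
    (Xedges C i TA TB SA SB).card = (Xpairs C i TA TB SA SB).card := by
  apply Finset.card_image_of_injOn
  intro q hq q' hq' heq
  rw [Finset.mem_coe, mem_Xpairs] at hq hq'
  rw [Sym2.eq_iff] at heq
  rcases heq with ⟨h1, h2⟩ | ⟨h1, h2⟩
  · exact Prod.ext h1 h2
  · exact absurd (h1.symm ▸ hq'.2.1 : q.1 ∈ C.bags i TB)
      (fun hh => Finset.disjoint_left.mp hdisj hq.1 hh)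

end Aux

set_option maxHeartbeats 2000000 in
/-- (Lemma 10.) The union of solutions of the profiles of an
`f'`-decomposition of `π = (T, D, ∅, f)` is a solution of `π` whose vertex-cover-value
equals `Σⱼ νⱼ` plus the stated sum over pairs `j < ℓ` and black edges of `G_{i-1}`. -/
theorem cover_value_of_union {α : Type} [DecidableEq α] {n : ℕ}
    (C : ContractionSeq α n) (d k : ℕ) (hW : C.HasWidth d)
    (i : ℕ) (h2 : 2 ≤ i) (hin : i ≤ n)
    (T D : Finset α) (f : α → ℕ) (hπ : IsExtProfile C k d i T D ∅ f)
    (hv : C.cw i ∈ T)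
    (f' : α → ℕ) (hf' : FCompat C k i T f f')
    (m : ℕ) (Tj Dj : Fin m → Finset α) (fj : Fin m → α → ℕ)
    (hdec : IsFDecomp C k d i T D ∅ f' m Tj Dj (fun _ => ∅) fj)
    (Sj : Fin m → Finset α) (νj : Fin m → ℕ)
    (hSj : ∀ j, IsSolution C (i - 1) (Tj j) (fj j) (Sj j))
    (hν : ∀ j, νj j = vcValue C (i - 1) (Tj j) (Sj j)) :
    IsSolution C i T f (Finset.univ.biUnion Sj) ∧
    vcValue C i T (Finset.univ.biUnion Sj) =
      (∑ j, νj j) +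
      ∑ p ∈ Finset.univ.filter (fun p : Fin m × Fin m => p.1 < p.2),
        ∑ q ∈ (Tj p.1 ×ˢ Tj p.2).filter (fun q => (C.seq (i - 1)).black q.1 q.2),
          (fj p.1 q.1 * (C.bag (i - 1) q.2).card +
            fj p.2 q.2 * (C.bag (i - 1) q.1).card -
            fj p.1 q.1 * fj p.2 q.2) := by
  classical
  obtain ⟨hbasicT, -, hf0, hfk, hsum, hfbag, hDdef⟩ := hπ
  obtain ⟨hext, hfjeq, hD'eq, hMeq, hdd⟩ := hdec
  obtain ⟨hbp, hTdisj, hTunion, hDeq, hDcompat, hnored⟩ := hdd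
  obtain ⟨hcu, hcv, hnecucv, hcwv, hverts, hbw, hrw, hsame⟩ := C.step i h2 hin
  have h1n : 1 ≤ i - 1 := by omega
  have hn1 : i - 1 ≤ n := by omega
  have trip := trip_all C (i - 1) h1n hn1
  have hTsub : T ⊆ (C.seq i).verts := hbasicT.1
  have hTjsub : ∀ j, Tj j ⊆ (C.seq (i - 1)).verts := fun j => ((hext j).1).1
  have hDjdef : ∀ j, Dj j = (Tj j).filter (fun u => fj j u ≠ 0) :=
    fun j => (hext j).2.2.2.2.2.2
  -- vertices of T other than cw are old vertices
  have hTold : ∀ u ∈ T, u ≠ C.cw i →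
      u ∈ (C.seq (i - 1)).verts ∧ u ≠ C.cu i ∧ u ≠ C.cv i := by
    intro u hu hne
    have hh := hTsub hu
    rw [hverts] at hh
    rcases Finset.mem_insert.mp hh with h | h
    · exact absurd h hne
    · have h3 := Finset.mem_sdiff.mp h
      simp only [Finset.mem_insert, Finset.mem_singleton] at h3
      exact ⟨h3.1, by tauto, by tauto⟩
  have hpartne : ∀ {j ℓ : Fin m}, j ≠ ℓ → ∀ {u w : α}, u ∈ Tj j → w ∈ Tj ℓ → u ≠ w := by
    intro j ℓ hjl u w hu hw heq
    subst heq
    exact Finset.disjoint_left.mp (hTdisj j ℓ hjl) hu hw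
  have bagsdisj : ∀ {j ℓ : Fin m}, j ≠ ℓ →
      Disjoint (C.bags (i - 1) (Tj j)) (C.bags (i - 1) (Tj ℓ)) := by
    intro j ℓ hjl
    rw [Finset.disjoint_left]
    intro x hx hx'
    obtain ⟨u, hu, hxu⟩ := mem_bags.mp hx
    obtain ⟨w, hw, hxw⟩ := mem_bags.mp hx'
    exact Finset.disjoint_left.mp
      ((trip u (hTjsub j hu) w (hTjsub ℓ hw) (hpartne hjl hu hw)).1) hxu hxw
  have bagsame : ∀ {j ℓ : Fin m} {x : α}, x ∈ C.bags (i - 1) (Tj j) →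
      x ∈ C.bags (i - 1) (Tj ℓ) → j = ℓ := by
    intro j ℓ x h1 h2'
    by_contra hne
    exact Finset.disjoint_left.mp (bagsdisj hne) h1 h2'
  have bagsame' : ∀ {u w x : α}, u ∈ (C.seq (i - 1)).verts → w ∈ (C.seq (i - 1)).verts →
      x ∈ C.bag (i - 1) u → x ∈ C.bag (i - 1) w → u = w := by
    intro u w x hu hw hh1 hh2
    by_contra hne
    exact Finset.disjoint_left.mp (trip u hu w hw hne).1 hh1 hh2
  -- bags i T as union of the part bags
  have hbagsT' : C.bags i T = C.bags (i - 1) (newT C i T) := by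
    ext x
    rw [mem_bags, mem_bags]
    constructor
    · rintro ⟨u, hu, hx⟩
      by_cases hucw : u = C.cw i
      · subst hucw
        rw [bag_cw C h2, Finset.mem_union] at hx
        rcases hx with hx | hx
        · exact ⟨C.cu i, Finset.mem_union_right _ (by simp), hx⟩
        · exact ⟨C.cv i, Finset.mem_union_right _ (by simp), hx⟩
      · exact ⟨u, Finset.mem_union_left _ (Finset.mem_erase.mpr ⟨hucw, hu⟩),
          (bag_of_ne C h2 hucw) ▸ hx⟩
    · rintro ⟨u, hu, hx⟩
      rcases Finset.mem_union.mp hu with hu | hu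
      · exact ⟨u, Finset.mem_of_mem_erase hu,
          (bag_of_ne C h2 (Finset.ne_of_mem_erase hu)).symm ▸ hx⟩
      · refine ⟨C.cw i, hv, ?_⟩
        rw [bag_cw C h2, Finset.mem_union]
        rcases Finset.mem_insert.mp hu with h | h
        · exact Or.inl (h ▸ hx)
        · rw [Finset.mem_singleton] at h
          exact Or.inr (h ▸ hx)
  have hbags : C.bags i T = Finset.univ.biUnion (fun j => C.bags (i - 1) (Tj j)) := by
    rw [hbagsT', hTunion]
    ext x
    rw [mem_bags]
    simp only [Finset.mem_biUnion, Finset.mem_univ, true_and]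
    constructor
    · rintro ⟨u, ⟨j, hj⟩, hx⟩
      exact ⟨j, mem_bags.mpr ⟨u, hj, hx⟩⟩
    · rintro ⟨j, hj⟩
      obtain ⟨u, hu, hx⟩ := mem_bags.mp hj
      exact ⟨u, ⟨j, hu⟩, hx⟩
  have hcumem : C.cu i ∈ newT C i T := Finset.mem_union_right _ (by simp)
  have hcvmem : C.cv i ∈ newT C i T := Finset.mem_union_right _ (by simp)
  have getj : ∀ u ∈ newT C i T, ∃ j, u ∈ Tj j := by
    intro u hu
    rw [hTunion] at hu
    obtain ⟨j, -, hj⟩ := Finset.mem_biUnion.mp hu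
    exact ⟨j, hj⟩
  have hSjsub : ∀ j, Sj j ⊆ C.bags (i - 1) (Tj j) := fun j => (hSj j).1
  have hfjval : ∀ j, ∀ u ∈ Tj j, fj j u = (Sj j ∩ C.bag (i - 1) u).card :=
    fun j => (hSj j).2
  have hScap : ∀ (j : Fin m), ∀ u ∈ Tj j,
      (Finset.univ.biUnion Sj) ∩ C.bag (i - 1) u = Sj j ∩ C.bag (i - 1) u := by
    intro j u hu
    ext x
    simp only [Finset.mem_inter, Finset.mem_biUnion, Finset.mem_univ, true_and]
    constructor
    · rintro ⟨⟨ℓ, hxl⟩, hxb⟩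
      refine ⟨?_, hxb⟩
      by_cases hlj : ℓ = j
      · exact hlj ▸ hxl
      · exact absurd (hSjsub ℓ hxl) (fun hh =>
          Finset.disjoint_left.mp (bagsdisj hlj) hh (mem_bags.mpr ⟨u, hu, hxb⟩))
    · rintro ⟨hxs, hxb⟩
      exact ⟨⟨j, hxs⟩, hxb⟩
  have hcardS : ∀ (j : Fin m), ∀ u ∈ Tj j,
      ((Finset.univ.biUnion Sj) ∩ C.bag (i - 1) u).card = f' u := by
    intro j u hu
    rw [hScap j u hu, ← hfjval j u hu, hfjeq j u hu]
  -- Part 1: S is a solution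
  have sol1 : (Finset.univ.biUnion Sj) ⊆ C.bags i T := by
    rw [hbags]
    intro x hx
    obtain ⟨j, -, hj⟩ := Finset.mem_biUnion.mp hx
    exact Finset.mem_biUnion.mpr ⟨j, Finset.mem_univ j, hSjsub j hj⟩
  have sol2 : ∀ u ∈ T, f u = ((Finset.univ.biUnion Sj) ∩ C.bag i u).card := by
    intro u hu
    by_cases hucw : u = C.cw i
    · subst hucw
      obtain ⟨j1, hj1⟩ := getj _ hcumem
      obtain ⟨j2, hj2⟩ := getj _ hcvmem
      have hdisj2 : Disjoint (C.bag (i - 1) (C.cu i)) (C.bag (i - 1) (C.cv i)) :=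
        (trip _ hcu _ hcv hnecucv).1
      rw [bag_cw C h2, Finset.inter_union_distrib_left,
        Finset.card_union_of_disjoint
          (hdisj2.mono Finset.inter_subset_right Finset.inter_subset_right),
        hcardS j1 _ hj1, hcardS j2 _ hj2]
      exact hf'.2.2.1
    · have hue : u ∈ T.erase (C.cw i) := Finset.mem_erase.mpr ⟨hucw, hu⟩
      obtain ⟨j, hj⟩ := getj u (Finset.mem_union_left _ hue)
      rw [bag_of_ne C h2 hucw, hcardS j u hj, hf'.2.2.2.2.2 u hue]
  -- cross edges force black edges of G_{i-1}
  have crossblack : ∀ {j ℓ : Fin m}, j ≠ ℓ → ∀ {u w x y : α}, u ∈ Tj j → w ∈ Tj ℓ →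
      x ∈ C.bag (i - 1) u → y ∈ C.bag (i - 1) w → (C.seq 1).black x y →
      (x ∈ Sj j ∨ y ∈ Sj ℓ) → (C.seq (i - 1)).black u w := by
    intro j ℓ hjl u w x y hu hw hx hy hb hcond
    rcases (trip u (hTjsub j hu) w (hTjsub ℓ hw) (hpartne hjl hu hw)).2.2 x hx y hy hb
      with h | h
    · exact h
    · exfalso
      rcases hcond with hc | hc
      · have hf : fj j u ≠ 0 := by
          rw [hfjval j u hu]
          have hxm : x ∈ Sj j ∩ C.bag (i - 1) u := Finset.mem_inter.mpr ⟨hc, hx⟩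
          intro h0
          rw [Finset.card_eq_zero.mp h0] at hxm
          exact absurd hxm (Finset.notMem_empty x)
        have hud : u ∈ Dj j := by
          rw [hDjdef j]; exact Finset.mem_filter.mpr ⟨hu, hf⟩
        exact hnored ℓ j (Ne.symm hjl) w hw u hud ((C.seq (i - 1)).red_symm _ _ h)
      · have hf : fj ℓ w ≠ 0 := by
          rw [hfjval ℓ w hw]
          have hym : y ∈ Sj ℓ ∩ C.bag (i - 1) w := Finset.mem_inter.mpr ⟨hc, hy⟩
          intro h0
          rw [Finset.card_eq_zero.mp h0] at hym
          exact absurd hym (Finset.notMem_empty y)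
        have hwd : w ∈ Dj ℓ := by
          rw [hDjdef ℓ]; exact Finset.mem_filter.mpr ⟨hw, hf⟩
        exact hnored j ℓ hjl u hu w hwd h
  -- endpoints of edges of the j-th edge set lie in the j-th bags
  have Ejpts : ∀ (j : Fin m) (e : Sym2 α),
      e ∈ edgeFS C (Sj j) (C.bags (i - 1) (Tj j)) →
      ∀ z ∈ e, z ∈ C.bags (i - 1) (Tj j) := by
    intro j e he z hz
    obtain ⟨x, y, rfl, hb, hx, hy⟩ := mem_edgeFS.mp he
    rw [Sym2.mem_iff] at hz
    rcases hz with rfl | rfl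
    · exact hSjsub j hx
    · exact hy
  -- the decomposition of the edge set
  have hEdecomp : edgeFS C (Finset.univ.biUnion Sj) (C.bags i T) =
      (Finset.univ.biUnion (fun j => edgeFS C (Sj j) (C.bags (i - 1) (Tj j)))) ∪
      ((Finset.univ.filter (fun p : Fin m × Fin m => p.1 < p.2)).biUnion
        (fun p => Xedges C (i - 1) (Tj p.1) (Tj p.2) (Sj p.1) (Sj p.2))) := by
    ext e
    simp only [Finset.mem_union, Finset.mem_biUnion, Finset.mem_univ, true_and,
      Finset.mem_filter]
    constructor
    · intro he
      obtain ⟨x, y, rfl, hb, hxS, hyT⟩ := mem_edgeFS.mp he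
      obtain ⟨j, -, hxj⟩ := Finset.mem_biUnion.mp hxS
      rw [hbags] at hyT
      obtain ⟨ℓ, -, hyl⟩ := Finset.mem_biUnion.mp hyT
      by_cases hjl : j = ℓ
      · subst hjl
        exact Or.inl ⟨j, mem_edgeFS.mpr ⟨x, y, rfl, hb, hxj, hyl⟩⟩
      · have hxT : x ∈ C.bags (i - 1) (Tj j) := hSjsub j hxj
        rcases lt_or_gt_of_ne hjl with hlt | hgt
        · refine Or.inr ⟨(j, ℓ), hlt, ?_⟩
          exact Finset.mem_image.mpr ⟨(x, y),
            mem_Xpairs.mpr ⟨hxT, hyl, hb, Or.inl hxj⟩, rfl⟩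
        · refine Or.inr ⟨(ℓ, j), hgt, ?_⟩
          exact Finset.mem_image.mpr ⟨(y, x),
            mem_Xpairs.mpr ⟨hyl, hxT, (C.seq 1).black_symm _ _ hb, Or.inr hxj⟩,
            Sym2.eq_swap⟩
    · intro he
      rcases he with ⟨j, hej⟩ | ⟨p, hp, hep⟩
      · obtain ⟨x, y, rfl, hb, hx, hy⟩ := mem_edgeFS.mp hej
        refine mem_edgeFS.mpr ⟨x, y, rfl, hb, ?_, ?_⟩
        · exact Finset.mem_biUnion.mpr ⟨j, Finset.mem_univ j, hx⟩
        · rw [hbags]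
          exact Finset.mem_biUnion.mpr ⟨j, Finset.mem_univ j, hy⟩
      · obtain ⟨q, hq, rfl⟩ := Finset.mem_image.mp hep
        rw [mem_Xpairs] at hq
        obtain ⟨hq1, hq2, hb, hcond⟩ := hq
        rcases hcond with hc | hc
        · refine mem_edgeFS.mpr ⟨q.1, q.2, rfl, hb, ?_, ?_⟩
          · exact Finset.mem_biUnion.mpr ⟨p.1, Finset.mem_univ _, hc⟩
          · rw [hbags]
            exact Finset.mem_biUnion.mpr ⟨p.2, Finset.mem_univ _, hq2⟩
        · refine mem_edgeFS.mpr ⟨q.2, q.1, Sym2.eq_swap.symm, (C.seq 1).black_symm _ _ hb, ?_, ?_⟩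
          · exact Finset.mem_biUnion.mpr ⟨p.2, Finset.mem_univ _, hc⟩
          · rw [hbags]
            exact Finset.mem_biUnion.mpr ⟨p.1, Finset.mem_univ _, hq1⟩
  -- disjointness facts
  have hEdisj : ∀ j ∈ (Finset.univ : Finset (Fin m)), ∀ ℓ ∈ Finset.univ, j ≠ ℓ →
      Disjoint (edgeFS C (Sj j) (C.bags (i - 1) (Tj j)))
        (edgeFS C (Sj ℓ) (C.bags (i - 1) (Tj ℓ))) := by
    intro j _ ℓ _ hjl
    rw [Finset.disjoint_left]
    intro e hej hel
    obtain ⟨x, y, rfl, -, -, -⟩ := mem_edgeFS.mp hej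
    exact hjl (bagsame (Ejpts j _ hej x (Sym2.mem_mk_left x y))
      (Ejpts ℓ _ hel x (Sym2.mem_mk_left x y)))
  have hXdisj : ∀ p ∈ Finset.univ.filter (fun p : Fin m × Fin m => p.1 < p.2),
      ∀ p' ∈ Finset.univ.filter (fun p : Fin m × Fin m => p.1 < p.2), p ≠ p' →
      Disjoint (Xedges C (i - 1) (Tj p.1) (Tj p.2) (Sj p.1) (Sj p.2))
        (Xedges C (i - 1) (Tj p'.1) (Tj p'.2) (Sj p'.1) (Sj p'.2)) := by
    intro p hp p' hp' hpp
    have h1 : p.1 < p.2 := (Finset.mem_filter.mp hp).2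
    have h2' : p'.1 < p'.2 := (Finset.mem_filter.mp hp').2
    rw [Finset.disjoint_left]
    intro e hep hep'
    obtain ⟨q, hq, rfl⟩ := Finset.mem_image.mp hep
    obtain ⟨q', hq', heq⟩ := Finset.mem_image.mp hep'
    rw [mem_Xpairs] at hq hq'
    rw [Sym2.eq_iff] at heq
    rcases heq with ⟨e1, e2⟩ | ⟨e1, e2⟩
    · exact hpp (Prod.ext (bagsame (e1 ▸ hq'.1) hq.1) (bagsame (e2 ▸ hq'.2.1) hq.2.1)).symm
    · have c1 : p.2 = p'.1 := bagsame hq.2.1 (e1 ▸ hq'.1)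
      have c2 : p.1 = p'.2 := bagsame hq.1 (e2 ▸ hq'.2.1)
      have : p.1 < p.1 := by
        calc p.1 < p.2 := h1
        _ = p'.1 := c1
        _ < p'.2 := h2'
        _ = p.1 := c2.symm
      exact absurd this (lt_irrefl _)
  have hdisjEX : Disjoint
      (Finset.univ.biUnion (fun j => edgeFS C (Sj j) (C.bags (i - 1) (Tj j))))
      ((Finset.univ.filter (fun p : Fin m × Fin m => p.1 < p.2)).biUnion
        (fun p => Xedges C (i - 1) (Tj p.1) (Tj p.2) (Sj p.1) (Sj p.2))) := by
    rw [Finset.disjoint_left]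
    intro e he hx
    obtain ⟨j, -, hej⟩ := Finset.mem_biUnion.mp he
    obtain ⟨p, hp, hxp⟩ := Finset.mem_biUnion.mp hx
    have hplt : p.1 < p.2 := (Finset.mem_filter.mp hp).2
    obtain ⟨q, hq, heq⟩ := Finset.mem_image.mp hxp
    rw [mem_Xpairs] at hq
    have hm1 : q.1 ∈ C.bags (i - 1) (Tj j) :=
      Ejpts j e hej q.1 (heq ▸ Sym2.mem_mk_left q.1 q.2)
    have hm2 : q.2 ∈ C.bags (i - 1) (Tj j) :=
      Ejpts j e hej q.2 (heq ▸ Sym2.mem_mk_right q.1 q.2)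
    exact absurd ((bagsame hq.1 hm1).trans (bagsame hq.2.1 hm2).symm) (ne_of_lt hplt)
  -- per-pair computation
  have hXp_eq : ∀ p ∈ Finset.univ.filter (fun p : Fin m × Fin m => p.1 < p.2),
      Xpairs C (i - 1) (Tj p.1) (Tj p.2) (Sj p.1) (Sj p.2) =
      ((Tj p.1 ×ˢ Tj p.2).filter (fun q => (C.seq (i - 1)).black q.1 q.2)).biUnion
        (fun q => ((C.bag (i - 1) q.1) ×ˢ (C.bag (i - 1) q.2)).filter
          (fun r => r.1 ∈ Sj p.1 ∨ r.2 ∈ Sj p.2)) := by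
    intro p hp
    have hpne : p.1 ≠ p.2 := ne_of_lt (Finset.mem_filter.mp hp).2
    ext r
    rw [mem_Xpairs]
    simp only [Finset.mem_biUnion, Finset.mem_filter, Finset.mem_product]
    constructor
    · rintro ⟨hh1, hh2, hb, hcond⟩
      obtain ⟨u, hu, hru⟩ := mem_bags.mp hh1
      obtain ⟨w, hw, hrw2⟩ := mem_bags.mp hh2
      exact ⟨(u, w), ⟨⟨hu, hw⟩, crossblack hpne hu hw hru hrw2 hb hcond⟩,
        ⟨hru, hrw2⟩, hcond⟩
    · rintro ⟨⟨u, w⟩, ⟨⟨hu, hw⟩, hbl⟩, ⟨hru, hrw2⟩, hcond⟩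
      refine ⟨mem_bags.mpr ⟨u, hu, hru⟩, mem_bags.mpr ⟨w, hw, hrw2⟩, ?_, hcond⟩
      exact (trip u (hTjsub p.1 hu) w (hTjsub p.2 hw) (hpartne hpne hu hw)).2.1
        hbl r.1 hru r.2 hrw2
  have hqdisj : ∀ (p : Fin m × Fin m),
      ∀ q ∈ (Tj p.1 ×ˢ Tj p.2).filter (fun q => (C.seq (i - 1)).black q.1 q.2),
      ∀ q' ∈ (Tj p.1 ×ˢ Tj p.2).filter (fun q => (C.seq (i - 1)).black q.1 q.2),
      q ≠ q' →
      Disjoint (((C.bag (i - 1) q.1) ×ˢ (C.bag (i - 1) q.2)).filter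
          (fun r => r.1 ∈ Sj p.1 ∨ r.2 ∈ Sj p.2))
        (((C.bag (i - 1) q'.1) ×ˢ (C.bag (i - 1) q'.2)).filter
          (fun r => r.1 ∈ Sj p.1 ∨ r.2 ∈ Sj p.2)) := by
    intro p q hq q' hq' hne
    rw [Finset.mem_filter, Finset.mem_product] at hq hq'
    rw [Finset.disjoint_left]
    intro r hr hr'
    rw [Finset.mem_filter, Finset.mem_product] at hr hr'
    apply hne
    exact Prod.ext
      (bagsame' (hTjsub p.1 hq.1.1) (hTjsub p.1 hq'.1.1) hr.1.1 hr'.1.1)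
      (bagsame' (hTjsub p.2 hq.1.2) (hTjsub p.2 hq'.1.2) hr.1.2 hr'.1.2)
  have piece : ∀ (p : Fin m × Fin m), ∀ u ∈ Tj p.1, ∀ w ∈ Tj p.2,
      (((C.bag (i - 1) u) ×ˢ (C.bag (i - 1) w)).filter
        (fun r => r.1 ∈ Sj p.1 ∨ r.2 ∈ Sj p.2)).card =
      fj p.1 u * (C.bag (i - 1) w).card + fj p.2 w * (C.bag (i - 1) u).card -
        fj p.1 u * fj p.2 w := by
    intro p u hu w hw
    have hset : ((C.bag (i - 1) u) ×ˢ (C.bag (i - 1) w)).filter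
          (fun r => r.1 ∈ Sj p.1 ∨ r.2 ∈ Sj p.2) =
        ((Sj p.1 ∩ C.bag (i - 1) u) ×ˢ C.bag (i - 1) w) ∪
          ((C.bag (i - 1) u) ×ˢ (Sj p.2 ∩ C.bag (i - 1) w)) := by
      ext r
      simp only [Finset.mem_filter, Finset.mem_product, Finset.mem_union,
        Finset.mem_inter]
      tauto
    have hint : ((Sj p.1 ∩ C.bag (i - 1) u) ×ˢ C.bag (i - 1) w) ∩
          ((C.bag (i - 1) u) ×ˢ (Sj p.2 ∩ C.bag (i - 1) w)) =
        (Sj p.1 ∩ C.bag (i - 1) u) ×ˢ (Sj p.2 ∩ C.bag (i - 1) w) := by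
      ext r
      simp only [Finset.mem_inter, Finset.mem_product]
      tauto
    have hkey := Finset.card_union_add_card_inter
      ((Sj p.1 ∩ C.bag (i - 1) u) ×ˢ C.bag (i - 1) w)
      ((C.bag (i - 1) u) ×ˢ (Sj p.2 ∩ C.bag (i - 1) w))
    rw [hint] at hkey
    rw [hset, hfjval p.1 u hu, hfjval p.2 w hw]
    simp only [Finset.card_product] at hkey ⊢
    have hcomm : (C.bag (i - 1) u).card * (Sj p.2 ∩ C.bag (i - 1) w).card =
        (Sj p.2 ∩ C.bag (i - 1) w).card * (C.bag (i - 1) u).card := mul_comm _ _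
    omega
  -- put everything together
  refine ⟨⟨sol1, sol2⟩, ?_⟩
  rw [vcValue_eq_card, hEdecomp, Finset.card_union_of_disjoint hdisjEX,
    Finset.card_biUnion hEdisj, Finset.card_biUnion hXdisj]
  congr 1
  · exact Finset.sum_congr rfl (fun j _ => by rw [hν j, vcValue_eq_card])
  · refine Finset.sum_congr rfl (fun p hp => ?_)
    have hpne : p.1 ≠ p.2 := ne_of_lt (Finset.mem_filter.mp hp).2
    rw [card_Xedges C (i - 1) (Sj p.1) (Sj p.2) (bagsdisj hpne), hXp_eq p hp,
      Finset.card_biUnion (hqdisj p)]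
    refine Finset.sum_congr rfl (fun q hq => ?_)
    rw [Finset.mem_filter, Finset.mem_product] at hq
    exact piece p q.1 hq.1.1 q.2 hq.1.2
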